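/- Fix m ≥ 1 and real numbers c₁, …, c_m. Let P = ∑_{i : c_i > 0} c_i² and N = ∑_{i : c_i < 0} c_i². Then -2∑_i c_i·max(c_i, 0) + (∑_i c_i²)(∑_i max(c_i, 0)²) = P² - 2P + PN, and this quantity over all choices of (c_i) is minimized exactly when P = 1 and N = 0, with minimum value -1. -/

import Mathlib

theorem stmt_17 (m : ℕ) (hm : 1 ≤ m) (c : Fin m → ℝ) :
    (-2 * ∑ i, c i * max (c i) 0 + (∑ i, (c i)^2) * (∑ i, (max (c i) 0)^2)
      = (∑ i ∈ Finset.univ.filter (fun i => 0 < c i), (c i)^2)^2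
        - 2 * (∑ i ∈ Finset.univ.filter (fun i => 0 < c i), (c i)^2)
        + (∑ i ∈ Finset.univ.filter (fun i => 0 < c i), (c i)^2)
          * (∑ i ∈ Finset.univ.filter (fun i => c i < 0), (c i)^2)) ∧
    (-2 * ∑ i, c i * max (c i) 0 + (∑ i, (c i)^2) * (∑ i, (max (c i) 0)^2) ≥ -1) ∧
    (-2 * ∑ i, c i * max (c i) 0 + (∑ i, (c i)^2) * (∑ i, (max (c i) 0)^2) = -1 ↔
      (∑ i ∈ Finset.univ.filter (fun i => 0 < c i), (c i)^2) = 1 ∧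
      (∑ i ∈ Finset.univ.filter (fun i => c i < 0), (c i)^2) = 0) := by
  set P := ∑ i ∈ Finset.univ.filter (fun i => 0 < c i), (c i)^2 with hPdef
  set N := ∑ i ∈ Finset.univ.filter (fun i => c i < 0), (c i)^2 with hNdef
  have h1 : ∑ i, c i * max (c i) 0 = P := by
    rw [hPdef, Finset.sum_filter]
    refine Finset.sum_congr rfl fun i _ => ?_
    rcases le_or_gt (c i) 0 with h | h
    · simp [max_eq_right h, not_lt.mpr h, mul_nonpos_iff, h]
    · rw [max_eq_left h.le, if_pos h, sq]
  have h2 : ∑ i, (max (c i) 0)^2 = P := by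
    rw [hPdef, Finset.sum_filter]
    refine Finset.sum_congr rfl fun i _ => ?_
    rcases le_or_gt (c i) 0 with h | h
    · simp [max_eq_right h, not_lt.mpr h]
    · rw [max_eq_left h.le, if_pos h]
  have h3 : ∑ i, (c i)^2 = P + N := by
    rw [hPdef, hNdef, Finset.sum_filter, Finset.sum_filter, ← Finset.sum_add_distrib]
    refine Finset.sum_congr rfl fun i _ => ?_
    rcases lt_trichotomy (c i) 0 with h | h | h
    · simp [h, not_lt.mpr h.le]
    · simp [h]
    · simp [h, not_lt.mpr h.le]
  have hP0 : 0 ≤ P := Finset.sum_nonneg fun i _ => sq_nonneg _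
  have hN0 : 0 ≤ N := Finset.sum_nonneg fun i _ => sq_nonneg _
  rw [h1, h2, h3]
  refine ⟨by ring, by nlinarith [mul_nonneg hP0 hN0, sq_nonneg (P - 1)], ?_⟩
  constructor
  · intro h
    have hPN : 0 ≤ P * N := mul_nonneg hP0 hN0
    have hP1 : P = 1 := by nlinarith [sq_nonneg (P - 1)]
    refine ⟨hP1, by nlinarith⟩
  · rintro ⟨hP, hN⟩
    rw [hP, hN]; ring
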